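/- arXiv:1811.04611 — 4 statements merged into one kernel-verified Lean document; each statement's English description precedes it below -/
import Mathlib

section
/- Let $(a_i)_{i \geq 0}$ be a sequence of non-negative real numbers, all but finitely many zero. Suppose there exist real numbers $\mu_0, \mu_1, \mu_2$, a real number $c \geq 0$, and a positive integer $m$ such that $\sum_{i \geq 0} a_i = \mu_0$, $\sum_{i \geq 0} i \cdot a_i = \mu_1 c$, $\sum_{i \geq 0} i(i-1) a_i \leq \mu_2 c$, and $2m\mu_1 > \mu_2$. Then $c \leq \frac{m(m+1)\mu_0}{2m\mu_1 - \mu_2}$. -/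
/-- Lemma (technical auxiliary): if `∑ aᵢ = μ₀`, `∑ i·aᵢ = μ₁·c`,
`∑ i(i-1)·aᵢ ≤ μ₂·c` and `2mμ₁ > μ₂`, then `c ≤ m(m+1)μ₀ / (2mμ₁ - μ₂)`. -/
theorem stmt_0 (a : ℕ → ℝ) (ha : ∀ i, 0 ≤ a i)
    (hfin : ∀ᶠ i in Filter.atTop, a i = 0)
    (μ0 μ1 μ2 c : ℝ) (hc : 0 ≤ c) (m : ℕ) (hm : 0 < m)
    (h0 : ∑' i : ℕ, a i = μ0)
    (h1 : ∑' i : ℕ, (i : ℝ) * a i = μ1 * c)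
    (h2 : ∑' i : ℕ, (i : ℝ) * ((i : ℝ) - 1) * a i ≤ μ2 * c)
    (hden : 2 * (m : ℝ) * μ1 > μ2) :
    c ≤ (m : ℝ) * ((m : ℝ) + 1) * μ0 / (2 * (m : ℝ) * μ1 - μ2) := by
  obtain ⟨N, hN⟩ := Filter.eventually_atTop.mp hfin
  have e0 : ∑' i : ℕ, a i = ∑ i ∈ Finset.range N, a i :=
    tsum_eq_sum (fun i hi => hN i (le_of_not_gt (fun h => hi (Finset.mem_range.mpr h))))
  have e1 : ∑' i : ℕ, (i : ℝ) * a i = ∑ i ∈ Finset.range N, (i : ℝ) * a i :=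
    tsum_eq_sum (fun i hi => by
      rw [hN i (le_of_not_gt (fun h => hi (Finset.mem_range.mpr h))), mul_zero])
  have e2 : ∑' i : ℕ, (i : ℝ) * ((i : ℝ) - 1) * a i
      = ∑ i ∈ Finset.range N, (i : ℝ) * ((i : ℝ) - 1) * a i :=
    tsum_eq_sum (fun i hi => by
      rw [hN i (le_of_not_gt (fun h => hi (Finset.mem_range.mpr h))), mul_zero])
  rw [e0] at h0; rw [e1] at h1; rw [e2] at h2
  set S0 := ∑ i ∈ Finset.range N, a i
  set S1 := ∑ i ∈ Finset.range N, (i : ℝ) * a i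
  set S2 := ∑ i ∈ Finset.range N, (i : ℝ) * ((i : ℝ) - 1) * a i
  have key : 0 ≤ S2 - 2 * (m : ℝ) * S1 + (m : ℝ) * ((m : ℝ) + 1) * S0 := by
    have heq : S2 - 2 * (m : ℝ) * S1 + (m : ℝ) * ((m : ℝ) + 1) * S0
        = ∑ i ∈ Finset.range N,
            ((i : ℝ) - m) * ((i : ℝ) - m - 1) * a i := by
      simp only [S0, S1, S2, Finset.mul_sum, ← Finset.sum_sub_distrib,
        ← Finset.sum_add_distrib]
      exact Finset.sum_congr rfl (fun i _ => by ring)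
    rw [heq]
    apply Finset.sum_nonneg
    intro i _
    apply mul_nonneg _ (ha i)
    rcases le_or_gt i m with h | h
    · have h1' : (i : ℝ) ≤ m := by exact_mod_cast h
      nlinarith
    · have h1' : (m : ℝ) + 1 ≤ i := by exact_mod_cast h
      nlinarith
  have hden' : 0 < 2 * (m : ℝ) * μ1 - μ2 := by linarith
  rw [h0, h1] at key
  rw [le_div_iff₀ hden']
  nlinarith
end

section
/- Let $q$ be a prime power, $n \geq 3$, and suppose $m$ is a positive integer with $2(q+1)m > \frac{q^{n-2}-1}{q-1}$. Then the maximum number $\mathcal{A}_q(n, n-2, n-3; 2)$ of $(n-2)$-dimensional subspaces of $\mathbb{F}_q^n$ such that every $(n-3)$-dimensional subspace is contained in at most $2$ of them satisfies $\mathcal{A}_q(n, n-2, n-3; 2) \leq \left\lfloor \frac{q^n - 1}{q - 1} \cdot \frac{m(m+1)}{2(q+1)m - \frac{q^{n-2}-1}{q-1}} \right\rfloor$. -/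
open Module Submodule Finset

section AuxSP

variable {F : Type*} [Field F] [Fintype F]

private lemma SP.int_le_sq (x : ℤ) : x ≤ x ^ 2 := by
  rcases le_or_gt x 0 with h | h <;> nlinarith

private lemma SP.key_nat (m a : ℕ) : 2 * m * a ≤ a * (a - 1) + m * (m + 1) := by
  rcases Nat.eq_zero_or_pos a with rfl | ha
  · simp
  · have h1 : 1 ≤ a := ha
    zify [h1]
    have := SP.int_le_sq ((a : ℤ) - m)
    nlinarith

private lemma SP.geom_mul (q : ℕ) (hq : 2 ≤ q) (d : ℕ) :
    (∑ i ∈ Finset.range d, q ^ i) * (q - 1) = q ^ d - 1 := by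
  have h1 : 1 ≤ q := by omega
  have h2 : 1 ≤ q ^ d := Nat.one_le_pow _ _ (by omega)
  have := geom_sum_mul (q : ℤ) d
  have hz : ((∑ i ∈ Finset.range d, q ^ i) * (q - 1) : ℕ) = ((q ^ d - 1 : ℕ) : ℤ) := by
    push_cast [h1, h2]
    exact this
  exact_mod_cast hz

/-- The number of 1-dimensional subspaces times `q - 1` equals `q ^ dim - 1`. -/
private lemma SP.card_lines_mul (V : Type*) [AddCommGroup V] [Module F V]
    [FiniteDimensional F V] :
    Nat.card {L : Submodule F V // finrank F L = 1} * (Fintype.card F - 1)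
      = Fintype.card F ^ finrank F V - 1 := by
  classical
  have hfinV : Finite V := Module.finite_of_finite F
  cases nonempty_fintype V
  have hfinS : Finite (Submodule F V) :=
    Finite.of_injective (fun p : Submodule F V => (p : Set V)) SetLike.coe_injective
  cases nonempty_fintype (Submodule F V)
  set q := Fintype.card F with hq
  have hq2 : 2 ≤ q := Fintype.one_lt_card
  -- the set of nonzero vectors
  set Eset : Finset V := Finset.univ.filter (fun x : V => x ≠ 0) with hEset
  set Lset : Finset (Submodule F V) :=
    Finset.univ.filter (fun L : Submodule F V => finrank F L = 1) with hLset
  have hmem : ∀ x ∈ Eset, span F {x} ∈ Lset := by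
    intro x hx
    simp only [hEset, Finset.mem_filter, Finset.mem_univ, true_and] at hx
    simp only [hLset, Finset.mem_filter, Finset.mem_univ, true_and]
    exact finrank_span_singleton hx
  have hcount := Finset.card_eq_sum_card_fiberwise hmem
  -- each fiber has q - 1 elements
  have hfiber : ∀ L ∈ Lset, (Eset.filter (fun x => span F {x} = L)).card = q - 1 := by
    intro L hL
    simp only [hLset, Finset.mem_filter, Finset.mem_univ, true_and] at hL
    have heq : Eset.filter (fun x => span F {x} = L)
        = (Finset.univ.filter (fun x : V => x ∈ L)).erase 0 := by
      ext x
      simp only [hEset, Finset.mem_filter, Finset.mem_univ, true_and, Finset.mem_erase]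
      constructor
      · rintro ⟨hx0, hspan⟩
        refine ⟨hx0, ?_⟩
        rw [← hspan]
        exact mem_span_singleton_self x
      · rintro ⟨hx0, hxL⟩
        refine ⟨hx0, ?_⟩
        apply Submodule.eq_of_le_of_finrank_eq
        · rwa [span_le, Set.singleton_subset_iff]
        · rw [finrank_span_singleton hx0, hL]
    have hL0 : (0 : V) ∈ Finset.univ.filter (fun x : V => x ∈ L) := by
      simp [L.zero_mem]
    have hcardL : (Finset.univ.filter (fun x : V => x ∈ L)).card = q := by
      have h1 : (Finset.univ.filter (fun x : V => x ∈ L)).card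
          = Fintype.card {x : V // x ∈ L} := (Fintype.card_subtype _).symm
      have h2 : Fintype.card {x : V // x ∈ L} = q ^ finrank F L := by
        exact card_eq_pow_finrank (K := F) (V := L)
      rw [h1, h2, hL, pow_one]
    rw [heq, Finset.card_erase_of_mem hL0, hcardL]
  have hEcard : Eset.card = q ^ finrank F V - 1 := by
    have h0 : (0 : V) ∈ (Finset.univ : Finset V) := Finset.mem_univ _
    have : Eset = Finset.univ.erase 0 := by
      ext x; simp [hEset]
    rw [this, Finset.card_erase_of_mem h0, ← Fintype.card, card_eq_pow_finrank (K := F) (V := V)]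
  have hNat : Nat.card {L : Submodule F V // finrank F L = 1} = Lset.card := by
    rw [Nat.card_eq_fintype_card, Fintype.card_subtype]
  rw [hNat]
  rw [hcount, Finset.sum_congr rfl hfiber, Finset.sum_const, smul_eq_mul] at hEcard
  rw [← hEcard]

/-- The number of hyperplanes times `q - 1` equals `q ^ dim - 1`. -/
private lemma SP.card_hyps_mul (V : Type*) [AddCommGroup V] [Module F V]
    [FiniteDimensional F V] (hd : 0 < finrank F V) :
    Nat.card {H : Submodule F V // finrank F H = finrank F V - 1} * (Fintype.card F - 1)
      = Fintype.card F ^ finrank F V - 1 := by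
  classical
  have key := SP.card_lines_mul (F := F) (Module.Dual F V)
  rw [Subspace.dual_finrank_eq] at key
  have hsum : ∀ W : Submodule F V,
      finrank F W + finrank F W.dualAnnihilator = finrank F V := by
    intro W
    have h1 : finrank F (V ⧸ W) = finrank F W.dualAnnihilator :=
      LinearEquiv.finrank_eq (R := F) (M := V ⧸ W) (N := ↥W.dualAnnihilator)
        (Subspace.quotEquivAnnihilator W)
    have h2 := Submodule.finrank_quotient_add_finrank W
    omega
  have e : {H : Submodule F V // finrank F H = finrank F V - 1}
      ≃ {L : Submodule F (Module.Dual F V) // finrank F L = 1} := by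
    refine ⟨fun H => ⟨H.1.dualAnnihilator, ?_⟩, fun L => ⟨L.1.dualCoannihilator, ?_⟩, ?_, ?_⟩
    · have := hsum H.1
      have hH := H.2
      omega
    · have := Subspace.finrank_add_finrank_dualCoannihilator_eq L.1
      have h2 := hsum L.1.dualCoannihilator
      have hL := L.2
      omega
    · intro H
      exact Subtype.ext Subspace.dualAnnihilator_dualCoannihilator_eq
    · intro L
      exact Subtype.ext Subspace.dualCoannihilator_dualAnnihilator_eq
  rw [Nat.card_congr e]
  exact key

/-- The number of hyperplanes containing a codimension-2 subspace is `q + 1`. -/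
private lemma SP.card_hyps_above {V : Type*} [AddCommGroup V] [Module F V]
    [FiniteDimensional F V] (U : Submodule F V) (h2 : finrank F U + 2 = finrank F V) :
    Nat.card {H : Submodule F V // finrank F H = finrank F V - 1 ∧ U ≤ H}
      = Fintype.card F + 1 := by
  classical
  set q := Fintype.card F with hqdef
  have hq2 : 2 ≤ q := Fintype.one_lt_card
  have hquot : finrank F (V ⧸ U) = 2 := by
    have := Submodule.finrank_quotient_add_finrank U
    omega
  have key := SP.card_lines_mul (F := F) (V ⧸ U)
  rw [hquot] at key
  have hrank : ∀ p : Submodule F (V ⧸ U),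
      finrank F (comap U.mkQ p) = finrank F p + finrank F U := by
    intro p
    have hle : U ≤ comap U.mkQ p := le_comap_mkQ U p
    have h1 := LinearMap.finrank_range_add_finrank_ker (U.mkQ.comp (comap U.mkQ p).subtype)
    rw [LinearMap.range_comp, Submodule.range_subtype,
      Submodule.map_comap_eq_of_surjective (Submodule.mkQ_surjective U) p,
      LinearMap.ker_comp, Submodule.ker_mkQ,
      (Submodule.comapSubtypeEquivOfLe hle).finrank_eq] at h1
    exact h1.symm
  have e : {p : Submodule F (V ⧸ U) // finrank F p = 1}
      ≃ {H : Submodule F V // finrank F H = finrank F V - 1 ∧ U ≤ H} := by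
    refine ⟨fun p => ⟨comap U.mkQ p.1, ?_, le_comap_mkQ U p.1⟩,
      fun H => ⟨map U.mkQ H.1, ?_⟩, ?_, ?_⟩
    · have := hrank p.1
      have hp := p.2
      omega
    · have := hrank (map U.mkQ H.1)
      rw [Submodule.comap_map_mkQ, sup_eq_right.mpr H.2.2] at this
      have hH := H.2.1
      omega
    · intro p
      apply Subtype.ext
      show map U.mkQ (comap U.mkQ p.1) = p.1
      exact Submodule.map_comap_eq_of_surjective (Submodule.mkQ_surjective U) p.1
    · intro H
      apply Subtype.ext
      show comap U.mkQ (map U.mkQ H.1) = H.1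
      rw [Submodule.comap_map_mkQ, sup_eq_right.mpr H.2.2]
  have hcongr := Nat.card_congr e
  apply Nat.eq_of_mul_eq_mul_right (show 0 < q - 1 by omega)
  rw [← hcongr, key]
  have h1 : 1 ≤ q := by omega
  rw [← hqdef]
  zify [h1, Nat.one_le_pow 2 q (by omega)]
  ring

/-- Counting hyperplanes of a subspace `U`, as submodules of the ambient space. -/
private lemma SP.card_sub_hyps {V : Type*} [AddCommGroup V] [Module F V]
    [FiniteDimensional F V] (U : Submodule F V) (hd : 0 < finrank F U) :
    Nat.card {T : Submodule F V // T ≤ U ∧ finrank F T = finrank F U - 1}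
        * (Fintype.card F - 1)
      = Fintype.card F ^ finrank F U - 1 := by
  classical
  have key := SP.card_hyps_mul (F := F) (V := ↥U) hd
  have e : {T' : Submodule F ↥U // finrank F T' = finrank F ↥U - 1}
      ≃ {T : Submodule F V // T ≤ U ∧ finrank F T = finrank F U - 1} := by
    refine ⟨fun T' => ⟨map U.subtype T'.1, map_subtype_le U T'.1, ?_⟩,
      fun T => ⟨comap U.subtype T.1, ?_⟩, ?_, ?_⟩
    · rw [Submodule.finrank_map_subtype_eq]
      exact T'.2
    · rw [(Submodule.comapSubtypeEquivOfLe T.2.1).finrank_eq]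
      exact T.2.2
    · intro T'
      apply Subtype.ext
      show comap U.subtype (map U.subtype T'.1) = T'.1
      rw [Submodule.comap_map_eq, Submodule.ker_subtype, sup_bot_eq]
    · intro T
      apply Subtype.ext
      show map U.subtype (comap U.subtype T.1) = T.1
      rw [Submodule.map_comap_subtype, inf_eq_right.mpr T.2.1]
  rw [← Nat.card_congr e]
  exact key

end AuxSP

/-- A `t-(n,k,λ)_q` subspace packing: a set of `k`-subspaces of `𝔽_q^n` such that
every `t`-subspace is contained in at most `λ` of them. -/
def IsSubspacePacking (F : Type*) [Field F] [Fintype F] (n k t lam : ℕ)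
    (S : Finset (Submodule F (Fin n → F))) : Prop :=
  (∀ U ∈ S, Module.finrank F U = k) ∧
  ∀ T : Submodule F (Fin n → F), Module.finrank F T = t →
    Nat.card {U : Submodule F (Fin n → F) // U ∈ S ∧ T ≤ U} ≤ lam

/-- Proposition: if `2(q+1)m > (q^{n-2}-1)/(q-1)` and `n ≥ 3`, then
`𝒜_q(n, n-2, n-3; 2) ≤ ⌊ (q^n-1)/(q-1) · m(m+1) / (2(q+1)m - (q^{n-2}-1)/(q-1)) ⌋`. -/
theorem stmt_3 (F : Type*) [Field F] [Fintype F] (q : ℕ) (hq : Fintype.card F = q)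
    (n m : ℕ) (hn : 3 ≤ n) (hm : 0 < m)
    (hineq : ((q : ℝ) ^ (n - 2) - 1) / ((q : ℝ) - 1) < 2 * ((q : ℝ) + 1) * m)
    (S : Finset (Submodule F (Fin n → F)))
    (hS : IsSubspacePacking F n (n - 2) (n - 3) 2 S) :
    S.card ≤ ⌊((q : ℝ) ^ n - 1) / ((q : ℝ) - 1) *
      ((m : ℝ) * ((m : ℝ) + 1) /
        (2 * ((q : ℝ) + 1) * m - ((q : ℝ) ^ (n - 2) - 1) / ((q : ℝ) - 1)))⌋₊ := by
  classical
  have hq2 : 2 ≤ q := hq ▸ Fintype.one_lt_card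
  have hVrank : finrank F (Fin n → F) = n := Module.finrank_fin_fun F
  have hfinS : Finite (Submodule F (Fin n → F)) :=
    Finite.of_injective (fun p : Submodule F (Fin n → F) => (p : Set (Fin n → F)))
      SetLike.coe_injective
  cases nonempty_fintype (Submodule F (Fin n → F))
  set N := ∑ i ∈ Finset.range n, q ^ i with hNdef
  set r := ∑ i ∈ Finset.range (n - 2), q ^ i with hrdef
  have hgeomN : N * (q - 1) = q ^ n - 1 := SP.geom_mul q hq2 n
  have hgeomr : r * (q - 1) = q ^ (n - 2) - 1 := SP.geom_mul q hq2 (n - 2)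
  set HS : Finset (Submodule F (Fin n → F)) :=
    Finset.univ.filter (fun H => finrank F H = n - 1) with hHSdef
  -- the number of hyperplanes is N
  have hHScard : HS.card = N := by
    have h1 : HS.card = Nat.card {H : Submodule F (Fin n → F) // finrank F H = n - 1} := by
      rw [Nat.card_eq_fintype_card, Fintype.card_subtype]
    have h2 := SP.card_hyps_mul (F := F) (V := Fin n → F) (by rw [hVrank]; omega)
    rw [hVrank, hq] at h2
    apply Nat.eq_of_mul_eq_mul_right (show 0 < q - 1 by omega)
    rw [h1, hgeomN]
    exact h2
  -- each member of S is contained in exactly q + 1 hyperplanes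
  have hcountH : ∀ U ∈ S, (HS.filter (fun H => U ≤ H)).card = q + 1 := by
    intro U hU
    have hUrank : finrank F U = n - 2 := hS.1 U hU
    have h2 := SP.card_hyps_above (F := F) (U := U) (by rw [hVrank, hUrank]; omega)
    rw [hVrank, hq] at h2
    have h3 : HS.filter (fun H => U ≤ H)
        = Finset.univ.filter
            (fun H : Submodule F (Fin n → F) => finrank F H = n - 1 ∧ U ≤ H) := by
      rw [hHSdef, Finset.filter_filter]
    rw [h3, ← Fintype.card_subtype, ← Nat.card_eq_fintype_card]
    exact h2
  -- each member of S contains exactly r subspaces of dimension n - 3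
  have hcountT : ∀ U ∈ S,
      (Finset.univ.filter (fun T => T ≤ U ∧ finrank F T = n - 3)).card = r := by
    intro U hU
    have hUrank : finrank F U = n - 2 := hS.1 U hU
    have h2 := SP.card_sub_hyps (F := F) (U := U) (by rw [hUrank]; omega)
    rw [hUrank, hq] at h2
    have h3 : n - 2 - 1 = n - 3 := by omega
    rw [h3] at h2
    apply Nat.eq_of_mul_eq_mul_right (show 0 < q - 1 by omega)
    rw [hgeomr, ← Fintype.card_subtype, ← Nat.card_eq_fintype_card]
    exact h2
  -- double counting: incidences between members and hyperplanes
  have hfact1 : ∑ H ∈ HS, (S.filter (fun U => U ≤ H)).card = (q + 1) * S.card := by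
    calc ∑ H ∈ HS, (S.filter (fun U => U ≤ H)).card
        = ∑ H ∈ HS, ∑ U ∈ S, if U ≤ H then 1 else 0 := by
          refine Finset.sum_congr rfl fun H _ => ?_
          rw [Finset.card_filter]
      _ = ∑ U ∈ S, ∑ H ∈ HS, if U ≤ H then 1 else 0 := Finset.sum_comm
      _ = ∑ U ∈ S, (HS.filter (fun H => U ≤ H)).card := by
          refine Finset.sum_congr rfl fun U _ => ?_
          rw [Finset.card_filter]
      _ = ∑ U ∈ S, (q + 1) := Finset.sum_congr rfl hcountH
      _ = (q + 1) * S.card := by rw [Finset.sum_const, smul_eq_mul, mul_comm]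
  -- dimension computations for two distinct members inside a common hyperplane
  have hdim : ∀ H U U' : Submodule F (Fin n → F), finrank F H = n - 1 → U ∈ S → U' ∈ S →
      U ≤ H → U' ≤ H → U ≠ U' →
      finrank F ↥(U ⊓ U') = n - 3 ∧ U ⊔ U' = H := by
    intro H U U' hH hU hU' hUH hU'H hne
    have hUr := hS.1 U hU
    have hU'r := hS.1 U' hU'
    have hsum := Submodule.finrank_sup_add_finrank_inf_eq U U'
    have hsup_le : finrank F ↥(U ⊔ U') ≤ n - 1 := by
      have h := Submodule.finrank_mono (sup_le hUH hU'H)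
      omega
    have hinf_lt : finrank F ↥(U ⊓ U') < n - 2 := by
      have hle : U ⊓ U' ≤ U := inf_le_left
      rcases lt_or_eq_of_le hle with hlt | heq
      · have := Submodule.finrank_lt_finrank_of_lt hlt
        omega
      · exfalso
        exact hne (Submodule.eq_of_le_of_finrank_eq (inf_eq_left.mp heq)
          (hUr.trans hU'r.symm))
    refine ⟨by omega, ?_⟩
    refine Submodule.eq_of_le_of_finrank_eq (sup_le hUH hU'H) ?_
    omega
  -- counting pairs of members in a common hyperplane
  have hfact2 : ∑ H ∈ HS,
      ((S.filter (fun U => U ≤ H)).card * ((S.filter (fun U => U ≤ H)).card - 1))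
      ≤ S.card * r := by
    have hmulsub : ∀ a : ℕ, a * (a - 1) = a * a - a := by
      intro a
      cases a with
      | zero => simp
      | succ b => simp [Nat.succ_sub_one, Nat.mul_succ]
    have hL : ∑ H ∈ HS,
        ((S.filter (fun U => U ≤ H)).card * ((S.filter (fun U => U ≤ H)).card - 1))
        = (HS.sigma (fun H => (S.filter (fun U => U ≤ H)).offDiag)).card := by
      rw [Finset.card_sigma]
      refine Finset.sum_congr rfl fun H _ => ?_
      rw [Finset.offDiag_card, hmulsub]
    have hR : (S.sigma (fun U =>
        Finset.univ.filter (fun T => T ≤ U ∧ finrank F T = n - 3))).card = S.card * r := by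
      rw [Finset.card_sigma, Finset.sum_congr rfl hcountT, Finset.sum_const, smul_eq_mul]
    rw [hL, ← hR]
    refine Finset.card_le_card_of_injOn
      (fun x => ⟨x.2.1, x.2.1 ⊓ x.2.2⟩) ?_ ?_
    · rintro ⟨H, U, U'⟩ hx
      rw [Finset.mem_coe, Finset.mem_sigma] at hx
      obtain ⟨hxH, hxp⟩ := hx
      rw [Finset.mem_offDiag] at hxp
      obtain ⟨ha, hb, hne⟩ := hxp
      rw [Finset.mem_filter] at ha hb
      rw [hHSdef, Finset.mem_filter] at hxH
      rw [Finset.mem_coe, Finset.mem_sigma, Finset.mem_filter]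
      exact ⟨ha.1, Finset.mem_univ _, inf_le_left,
        (hdim H U U' hxH.2 ha.1 hb.1 ha.2 hb.2 hne).1⟩
    · rintro ⟨H1, U1, U1'⟩ hx ⟨H2, U2, U2'⟩ hy hxy
      simp only [Finset.coe_sigma, Set.mem_sigma_iff, Finset.mem_coe] at hx hy
      obtain ⟨hxH, hxp⟩ := hx
      obtain ⟨hyH, hyp⟩ := hy
      rw [Finset.mem_offDiag] at hxp hyp
      obtain ⟨hxa, hxb, hxne⟩ := hxp
      obtain ⟨hya, hyb, hyne⟩ := hyp
      rw [Finset.mem_filter] at hxa hxb hya hyb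
      rw [hHSdef, Finset.mem_filter] at hxH hyH
      have h1 : U1 = U2 := congrArg (fun s => s.1) hxy
      have h2 : U1 ⊓ U1' = U2 ⊓ U2' := by
        have := congrArg (fun s : (_ : Submodule F (Fin n → F)) × Submodule F (Fin n → F) => s.2)
          hxy
        exact this
      subst h1
      have hdx := hdim H1 U1 U1' hxH.2 hxa.1 hxb.1 hxa.2 hxb.2 hxne
      have hdy := hdim H2 U1 U2' hyH.2 hya.1 hyb.1 hya.2 hyb.2 hyne
      have hU' : U1' = U2' := by
        by_contra hne2
        have hpack := hS.2 (U1 ⊓ U1') hdx.1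
        have hsub : ({U1, U1', U2'} : Finset (Submodule F (Fin n → F)))
            ⊆ Finset.univ.filter (fun W => W ∈ S ∧ U1 ⊓ U1' ≤ W) := by
          intro W hW
          rw [Finset.mem_insert, Finset.mem_insert, Finset.mem_singleton] at hW
          rw [Finset.mem_filter]
          rcases hW with rfl | rfl | rfl
          · exact ⟨Finset.mem_univ _, hxa.1, inf_le_left⟩
          · exact ⟨Finset.mem_univ _, hxb.1, inf_le_right⟩
          · exact ⟨Finset.mem_univ _, hyb.1, h2.le.trans inf_le_right⟩
        have h3 : ({U1, U1', U2'} : Finset (Submodule F (Fin n → F))).card = 3 := by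
          rw [Finset.card_insert_of_notMem (by simp [hxne, hyne]),
            Finset.card_insert_of_notMem (by simp [hne2]), Finset.card_singleton]
        have h4 : 3 ≤ Nat.card {U : Submodule F (Fin n → F) // U ∈ S ∧ U1 ⊓ U1' ≤ U} := by
          rw [Nat.card_eq_fintype_card, Fintype.card_subtype]
          calc 3 = ({U1, U1', U2'} : Finset (Submodule F (Fin n → F))).card := h3.symm
            _ ≤ _ := Finset.card_le_card hsub
        omega
      subst hU'
      have hH : H1 = H2 := by rw [← hdx.2, ← hdy.2]
      subst hH
      rfl
  -- the key integer inequality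
  have hmain : 2 * m * ((q + 1) * S.card) ≤ S.card * r + N * (m * (m + 1)) := by
    calc 2 * m * ((q + 1) * S.card)
        = ∑ H ∈ HS, 2 * m * (S.filter (fun U => U ≤ H)).card := by
          rw [← Finset.mul_sum, hfact1]
      _ ≤ ∑ H ∈ HS, ((S.filter (fun U => U ≤ H)).card
            * ((S.filter (fun U => U ≤ H)).card - 1) + m * (m + 1)) :=
          Finset.sum_le_sum fun H _ => SP.key_nat m _
      _ = (∑ H ∈ HS, (S.filter (fun U => U ≤ H)).card
            * ((S.filter (fun U => U ≤ H)).card - 1)) + HS.card * (m * (m + 1)) := by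
          rw [Finset.sum_add_distrib, Finset.sum_const, smul_eq_mul]
      _ ≤ S.card * r + N * (m * (m + 1)) := by
          rw [hHScard]
          exact Nat.add_le_add_right hfact2 _
  -- pass to the reals
  have hq1 : 1 ≤ q := by omega
  have hden : (0 : ℝ) < (q : ℝ) - 1 := by
    have : (2 : ℝ) ≤ (q : ℝ) := by exact_mod_cast hq2
    linarith
  have hNR' : (N : ℝ) * ((q : ℝ) - 1) = (q : ℝ) ^ n - 1 := by
    have h := hgeomN
    zify [hq1, Nat.one_le_pow n q (by omega)] at h
    exact_mod_cast h
  have hrR' : (r : ℝ) * ((q : ℝ) - 1) = (q : ℝ) ^ (n - 2) - 1 := by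
    have h := hgeomr
    zify [hq1, Nat.one_le_pow (n - 2) q (by omega)] at h
    exact_mod_cast h
  have hNR : (N : ℝ) = ((q : ℝ) ^ n - 1) / ((q : ℝ) - 1) := by
    rw [eq_div_iff hden.ne']
    exact hNR'
  have hrR : (r : ℝ) = ((q : ℝ) ^ (n - 2) - 1) / ((q : ℝ) - 1) := by
    rw [eq_div_iff hden.ne']
    exact hrR'
  have hD : (0 : ℝ) < 2 * ((q : ℝ) + 1) * m - (r : ℝ) := by
    rw [hrR]
    linarith
  have hmainR : 2 * (m : ℝ) * (((q : ℝ) + 1) * S.card)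
      ≤ (S.card : ℝ) * r + (N : ℝ) * ((m : ℝ) * ((m : ℝ) + 1)) := by
    exact_mod_cast hmain
  apply Nat.le_floor
  rw [← hNR, ← hrR, ← mul_div_assoc, le_div_iff₀ hD]
  nlinarith [hmainR]
end

section
/- Let $q$ be a prime power, $k \geq 2$, and let $\mathcal{P}$ be a non-empty multiset of 1-dimensional subspaces of $\mathbb{F}_q^n$ obtained as the union (with multiplicity) of the sets of 1-dimensional subspaces of a non-empty multiset of subspaces of $\mathbb{F}_q^n$, each of dimension at least $k$. Then for every hyperplane $\mathcal{H}$ (i.e., $(n-1)$-dimensional subspace) of $\mathbb{F}_q^n$, $|\mathcal{P}| \equiv |\mathcal{P} \cap \mathcal{H}| \pmod{q^{k-1}}$. -/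
open Module

theorem line_count (F : Type*) [Field F] [Fintype F] (n : ℕ)
    (U : Submodule F (Fin n → F)) :
    Nat.card {W : Submodule F (Fin n → F) // finrank F W = 1 ∧ W ≤ U}
      * (Fintype.card F - 1) = Fintype.card F ^ finrank F U - 1 := by
  classical
  set V := Fin n → F
  have hfinSub : Finite (Submodule F V) :=
    Finite.of_injective (fun W : Submodule F V => (W : Set V)) SetLike.coe_injective
  set S := {W : Submodule F V // finrank F W = 1 ∧ W ≤ U}
  set T := {v : V // v ∈ U ∧ ¬ v = 0}
  letI : Fintype S := Fintype.ofFinite _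
  have hg : ∀ v : T, finrank F (Submodule.span F {v.1}) = 1 ∧ Submodule.span F {v.1} ≤ U :=
    fun v => ⟨finrank_span_singleton v.2.2, Submodule.span_le.2 (by simp [v.2.1])⟩
  set g : T → S := fun v => ⟨Submodule.span F {v.1}, hg v⟩ with hgdef
  have key : ∀ (X : Submodule F V), Fintype.card {v : X // ¬ v = 0}
      = Fintype.card F ^ finrank F X - 1 := by
    intro X
    rw [Fintype.card_subtype_compl, Fintype.card_subtype_eq (0 : X),
      card_eq_pow_finrank (K := F) (V := X)]
  have fibEquiv : ∀ W : S, {v : T // g v = W} ≃ {v : W.1 // ¬ v = 0} := by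
    intro W
    refine ⟨fun x => ⟨⟨x.1.1, ?_⟩, ?_⟩,
      fun y => ⟨⟨y.1.1, W.2.2 y.1.2, fun h => y.2 (Subtype.ext h)⟩, ?_⟩, ?_, ?_⟩
    · have : Submodule.span F {x.1.1} = W.1 := congrArg Subtype.val x.2
      exact this ▸ Submodule.mem_span_singleton_self _
    · intro h
      exact x.1.2.2 (by simpa using congrArg Subtype.val h)
    · apply Subtype.ext
      show Submodule.span F {y.1.1} = W.1
      apply Submodule.eq_of_le_of_finrank_le
      · exact Submodule.span_le.2 (by simp [y.1.2])
      · rw [W.2.1, finrank_span_singleton (fun h => y.2 (Subtype.ext h))]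
    · intro x; ext; rfl
    · intro y; ext; rfl
  have hcardT : Fintype.card T = Fintype.card F ^ finrank F U - 1 := by
    have e : T ≃ {v : U // ¬ v = 0} :=
      ⟨fun x => ⟨⟨x.1, x.2.1⟩, fun h => x.2.2 (congrArg Subtype.val h)⟩,
       fun y => ⟨y.1.1, y.1.2, fun h => y.2 (Subtype.ext h)⟩,
       fun x => rfl, fun y => rfl⟩
    rw [Fintype.card_congr e, key]
  have hsig : Fintype.card T = Fintype.card S * (Fintype.card F - 1) := by
    rw [Fintype.card_congr (Equiv.sigmaFiberEquiv g).symm, Fintype.card_sigma]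
    have hfib : ∀ W : S, Fintype.card {v : T // g v = W} = Fintype.card F - 1 := by
      intro W
      rw [Fintype.card_congr (fibEquiv W), key, W.2.1, pow_one]
    simp [hfib, Finset.sum_const, mul_comm]
  rw [Nat.card_eq_fintype_card, ← hsig, hcardT]

/-- Lemma: let `𝒫` be the multiset of `1`-subspaces generated (with multiplicity)
from a non-empty multiset of subspaces of `𝔽_q^n`, each of dimension at least `k ≥ 2`.
Then for every hyperplane `ℋ`, `|𝒫| ≡ |𝒫 ∩ ℋ| (mod q^{k-1})`. -/
theorem stmt_5 (F : Type*) [Field F] [Fintype F] (q : ℕ) (hq : Fintype.card F = q)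
    (n k : ℕ) (hk : 2 ≤ k)
    (M : Multiset (Submodule F (Fin n → F))) (hM : M ≠ 0)
    (hdim : ∀ U ∈ M, k ≤ finrank F U)
    (H : Submodule F (Fin n → F)) (hH : finrank F H = n - 1) (hHtop : H ≠ ⊤) :
    (M.map (fun U => Nat.card
        {W : Submodule F (Fin n → F) // finrank F W = 1 ∧ W ≤ U})).sum ≡
    (M.map (fun U => Nat.card
        {W : Submodule F (Fin n → F) // finrank F W = 1 ∧ W ≤ U ∧ W ≤ H})).sum
      [MOD q ^ (k - 1)] := by
  subst hq
  set q := Fintype.card F with hq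
  have hq2 : 2 ≤ q := Fintype.one_lt_card
  have hn : 1 ≤ n := by
    rcases Nat.eq_zero_or_pos n with h0 | h; swap
    · exact h
    · subst h0
      exfalso
      apply hHtop
      exact Submodule.eq_top_iff'.2 fun x => by
        have : x = 0 := funext fun i => i.elim0
        rw [this]; exact H.zero_mem
  -- per-element congruence
  have main : ∀ U ∈ M, Nat.card
        {W : Submodule F (Fin n → F) // finrank F W = 1 ∧ W ≤ U} ≡ Nat.card
        {W : Submodule F (Fin n → F) // finrank F W = 1 ∧ W ≤ U ∧ W ≤ H}
        [MOD q ^ (k - 1)] := by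
    intro U hU
    have hd := hdim U hU
    set d := finrank F U with hd'
    set d' := finrank F (U ⊓ H : Submodule F (Fin n → F)) with hd''
    have hBeq : {W : Submodule F (Fin n → F) // finrank F W = 1 ∧ W ≤ U ∧ W ≤ H}
        ≃ {W : Submodule F (Fin n → F) // finrank F W = 1 ∧ W ≤ U ⊓ H} :=
      Equiv.subtypeEquivRight (fun W => by simp [le_inf_iff, and_assoc])
    have hA := line_count F n U
    have hB := line_count F n (U ⊓ H)
    rw [← Nat.card_congr hBeq] at hB
    have hle : d' ≤ d := Submodule.finrank_mono inf_le_left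
    have hge : d - 1 ≤ d' := by
      have h1 := Submodule.finrank_sup_add_finrank_inf_eq U H
      have h2 : finrank F ((U ⊔ H : Submodule F (Fin n → F))) ≤ n := by
        simpa using Submodule.finrank_le (U ⊔ H)
      have h3 : finrank F H = n - 1 := hH
      omega
    have hk1 : k - 1 ≤ d' := by omega
    -- q^{k-1} divides q^d - q^{d'}
    have hdvd : q ^ (k - 1) ∣ q ^ d - q ^ d' := by
      refine dvd_trans (pow_dvd_pow q hk1) (Nat.dvd_sub (pow_dvd_pow q hle) dvd_rfl)
    have hcop : Nat.Coprime (q - 1) (q ^ (k - 1)) := by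
      apply Nat.Coprime.pow_right
      have h : q - 1 + 1 = q := by omega
      rw [← h]
      simpa using Nat.coprime_succ_self_left (n := q - 1)
    refine Nat.ModEq.cancel_right_of_coprime (c := q - 1) (by simpa [Nat.coprime_comm] using hcop) ?_
    rw [hA, hB]
    have hple : q ^ d' - 1 ≤ q ^ d - 1 :=
      Nat.sub_le_sub_right (Nat.pow_le_pow_right (by omega) hle) 1
    rw [Nat.ModEq.comm, Nat.modEq_iff_dvd' hple]
    have : q ^ d - 1 - (q ^ d' - 1) = q ^ d - q ^ d' := by
      have : 1 ≤ q ^ d' := Nat.one_le_pow _ _ (by omega)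
      omega
    rw [this]; exact hdvd
  -- sum the congruences
  clear hdim hM
  induction M using Multiset.induction_on with
  | empty => simp; rfl
  | cons a s ih =>
    simp only [Multiset.map_cons, Multiset.sum_cons]
    exact Nat.ModEq.add (main a (Multiset.mem_cons_self a s))
      (ih fun U hU => main U (Multiset.mem_cons_of_mem hU))
end

section
/- Let $U = \operatorname{rowspace}(I_k \mid M_1)$ and $V = \operatorname{rowspace}(I_k \mid M_2)$ be the lifted subspaces of $k \times (n-k)$ matrices $M_1, M_2$ over $\mathbb{F}_q$. Then the subspace distance satisfies $d_S(U, V) = 2\operatorname{rank}(M_1 - M_2)$. -/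
open Module Matrix LinearMap

/-- If `U = rowspace (I_k | M₁)` and `V = rowspace (I_k | M₂)` are the liftings of
`k × (n-k)` matrices `M₁, M₂`, then `d_S(U,V) = 2 · rank (M₁ - M₂)`. -/
theorem stmt_10 (F : Type*) [Field F] [Fintype F] (k m : ℕ)
    (M1 M2 : Matrix (Fin k) (Fin m) F)
    (U V : Submodule F ((Fin k ⊕ Fin m) → F))
    (hU : U = Submodule.span F (Set.range (Matrix.fromCols (1 : Matrix (Fin k) (Fin k) F) M1)))
    (hV : V = Submodule.span F (Set.range (Matrix.fromCols (1 : Matrix (Fin k) (Fin k) F) M2))) :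
    finrank F ↥U + finrank F ↥V - 2 * finrank F ↥(U ⊓ V) = 2 * (M1 - M2).rank := by
  set A1 := Matrix.fromCols (1 : Matrix (Fin k) (Fin k) F) M1 with hA1
  set A2 := Matrix.fromCols (1 : Matrix (Fin k) (Fin k) F) M2 with hA2
  have hU' : U = LinearMap.range A1.vecMulLinear := by
    rw [hU, range_vecMulLinear]; rfl
  have hV' : V = LinearMap.range A2.vecMulLinear := by
    rw [hV, range_vecMulLinear]; rfl
  have hinj1 : Function.Injective A1.vecMulLinear := by
    intro x y hxy
    have := congrArg (fun w : (Fin k ⊕ Fin m) → F => fun i => w (Sum.inl i)) hxy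
    simpa [hA1, Matrix.vecMul_fromCols] using this
  have hinj2 : Function.Injective A2.vecMulLinear := by
    intro x y hxy
    have := congrArg (fun w : (Fin k ⊕ Fin m) → F => fun i => w (Sum.inl i)) hxy
    simpa [hA2, Matrix.vecMul_fromCols] using this
  have hdimU : finrank F ↥U = k := by
    rw [hU', LinearMap.finrank_range_of_inj hinj1]
    simp
  have hdimV : finrank F ↥V = k := by
    rw [hV', LinearMap.finrank_range_of_inj hinj2]
    simp
  set D := (M1 - M2).vecMulLinear with hD
  have hinter : U ⊓ V = Submodule.map A1.vecMulLinear (LinearMap.ker D) := by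
    apply le_antisymm
    · rintro w ⟨hwU, hwV⟩
      rw [hU'] at hwU
      rw [hV'] at hwV
      obtain ⟨x, hx⟩ := hwU
      obtain ⟨y, hy⟩ := hwV
      have hx' : w = Sum.elim (x ᵥ* 1) (x ᵥ* M1) := by
        rw [← hx]; simp [hA1, Matrix.vecMul_fromCols]
      have hy' : w = Sum.elim (y ᵥ* 1) (y ᵥ* M2) := by
        rw [← hy]; simp [hA2, Matrix.vecMul_fromCols]
      have hxy : x = y := by
        funext i
        have := congrFun (hx'.symm.trans hy') (Sum.inl i)
        simpa using this
      have hker : x ∈ LinearMap.ker D := by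
        rw [LinearMap.mem_ker, hD]
        have : x ᵥ* M1 = x ᵥ* M2 := by
          funext j
          have := congrFun (hx'.symm.trans hy') (Sum.inr j)
          simpa [hxy] using this
        rw [Matrix.vecMulLinear_apply, Matrix.vecMul_sub, this, sub_self]
      exact ⟨x, hker, hx⟩
    · rintro w ⟨x, hxker, rfl⟩
      have hM : x ᵥ* M1 = x ᵥ* M2 := by
        have := (LinearMap.mem_ker).mp hxker
        rw [hD] at this
        simp only [Matrix.vecMulLinear_apply, Matrix.vecMul_sub] at this
        exact sub_eq_zero.mp this
      constructor
      · rw [hU']; exact ⟨x, rfl⟩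
      · rw [hV']
        refine ⟨x, ?_⟩
        simp [hA1, hA2, Matrix.vecMul_fromCols, hM]
  have hdimI : finrank F ↥(U ⊓ V) = finrank F ↥(LinearMap.ker D) := by
    rw [hinter]
    exact (LinearEquiv.finrank_eq
      (Submodule.equivMapOfInjective A1.vecMulLinear hinj1 (LinearMap.ker D))).symm
  have hrank : finrank F (LinearMap.range D) = (M1 - M2).rank := by
    rw [hD, ← Matrix.mulVecLin_transpose, ← Matrix.rank_transpose (M1 - M2)]
    rfl
  have hrn : finrank F (LinearMap.ker D) + finrank F (LinearMap.range D) = k := by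
    have := LinearMap.finrank_range_add_finrank_ker D
    simpa [add_comm] using this
  rw [hdimU, hdimV, hdimI]
  omega
end
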